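/- Let p be a polynomial on ℂⁿ of degree k ≥ 1 with p(0) ≠ 0, and let A = {z ∈ ℂⁿ : p(z) = 0}. Then the function ρ(z) = −(1/deg p)·ln|p(z)| + 2·ln|z| is an exhaustion function for X = ℂⁿ \ A, i.e. ρ is defined and continuous on X \ {0} and for every C ∈ ℝ the sublevel set {z ∈ X : ρ(z) < C} is relatively compact in X. -/

import Mathlib

open MvPolynomial Real Finset

private lemma coord_abs_le {n : ℕ} (z : EuclideanSpace ℂ (Fin n)) (i : Fin n) :
    ‖z i‖ ≤ ‖z‖ := by
  have h : ‖z i‖ = ‖z i‖ := rfl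
  rw [h, EuclideanSpace.norm_eq]
  have h1 : ‖z i‖ ^ 2 ≤ ∑ j, ‖z j‖ ^ 2 :=
    Finset.single_le_sum (f := fun j => ‖z j‖ ^ 2) (fun j _ => sq_nonneg _) (Finset.mem_univ i)
  calc ‖z i‖ = Real.sqrt (‖z i‖ ^ 2) := by rw [Real.sqrt_sq (norm_nonneg _)]
    _ ≤ Real.sqrt (∑ j, ‖z j‖ ^ 2) := Real.sqrt_le_sqrt h1

private lemma eval_abs_le {n : ℕ} (p : MvPolynomial (Fin n) ℂ)
    (z : EuclideanSpace ℂ (Fin n)) :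
    ‖MvPolynomial.eval (fun i => z i) p‖ ≤
      (∑ d ∈ p.support, ‖p.coeff d‖) * (1 + ‖z‖) ^ p.totalDegree := by
  have h1 : (0:ℝ) ≤ 1 + ‖z‖ := by positivity
  have h1' : (1:ℝ) ≤ 1 + ‖z‖ := by linarith [norm_nonneg z]
  rw [MvPolynomial.eval_eq, Finset.sum_mul]
  refine (norm_sum_le _ _).trans (Finset.sum_le_sum fun d hd => ?_)
  rw [norm_mul]
  refine mul_le_mul_of_nonneg_left ?_ (norm_nonneg _)
  calc ‖∏ i ∈ d.support, z i ^ d i‖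
      = ∏ i ∈ d.support, ‖z i‖ ^ d i := by
        rw [norm_prod]; exact Finset.prod_congr rfl fun i _ => norm_pow _ _
    _ ≤ ∏ i ∈ d.support, (1 + ‖z‖) ^ d i :=
        Finset.prod_le_prod (fun i _ => pow_nonneg (norm_nonneg _) _)
          (fun i _ => pow_le_pow_left₀ (norm_nonneg _)
            ((coord_abs_le z i).trans (by linarith)) _)
    _ = (1 + ‖z‖) ^ (∑ i ∈ d.support, d i) := Finset.prod_pow_eq_pow_sum d.support d _
    _ ≤ (1 + ‖z‖) ^ p.totalDegree :=
        pow_le_pow_right₀ h1' (MvPolynomial.le_totalDegree hd)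

/-- for a polynomial `p` on `ℂⁿ` of degree `k ≥ 1` with `p(0) ≠ 0` and
`A = {p = 0}`, the function `ρ(z) = −(1/deg p)·ln|p(z)| + 2·ln‖z‖` is an exhaustion
function for `X = ℂⁿ \ A`: it is continuous on `X \ {0}` and each sublevel set
`{z ∈ X : z ≠ 0, ρ(z) < C}` is relatively compact in `X` (its closure in `ℂⁿ` is
compact and contained in `X`). -/
theorem complement_of_zero_set_exhaustion (n : ℕ) (p : MvPolynomial (Fin n) ℂ)
    (hd : 1 ≤ p.totalDegree)
    (h0 : MvPolynomial.eval (fun i => (0 : EuclideanSpace ℂ (Fin n)) i) p ≠ 0) :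
    ContinuousOn
        (fun z : EuclideanSpace ℂ (Fin n) =>
          -(((p.totalDegree : ℝ))⁻¹ *
              Real.log (‖MvPolynomial.eval (fun i => z i) p‖))
            + 2 * Real.log ‖z‖)
        ({z | MvPolynomial.eval (fun i => z i) p ≠ 0} \ {0}) ∧
    ∀ C : ℝ,
      IsCompact (closure {z : EuclideanSpace ℂ (Fin n) |
          MvPolynomial.eval (fun i => z i) p ≠ 0 ∧ z ≠ 0 ∧
          -(((p.totalDegree : ℝ))⁻¹ *
              Real.log (‖MvPolynomial.eval (fun i => z i) p‖))
            + 2 * Real.log ‖z‖ < C}) ∧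
      closure {z : EuclideanSpace ℂ (Fin n) |
          MvPolynomial.eval (fun i => z i) p ≠ 0 ∧ z ≠ 0 ∧
          -(((p.totalDegree : ℝ))⁻¹ *
              Real.log (‖MvPolynomial.eval (fun i => z i) p‖))
            + 2 * Real.log ‖z‖ < C}
        ⊆ {z | MvPolynomial.eval (fun i => z i) p ≠ 0} := by
  set k : ℕ := p.totalDegree with hk
  have hkpos : (0:ℝ) < (k:ℝ) := by exact_mod_cast hd
  have hg : Continuous fun z : EuclideanSpace ℂ (Fin n) =>
      MvPolynomial.eval (fun i => z i) p :=
    (MvPolynomial.continuous_eval p).comp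
      (continuous_pi fun i => (EuclideanSpace.proj (𝕜 := ℂ) i).continuous)
  constructor
  · intro z hz
    obtain ⟨hz1, hz2⟩ := hz
    have hz2' : z ≠ 0 := hz2
    have h1 : ContinuousAt
        (fun z : EuclideanSpace ℂ (Fin n) =>
          Real.log (‖MvPolynomial.eval (fun i => z i) p‖)) z :=
      ((hg.norm).continuousAt).log (norm_ne_zero_iff.mpr hz1)
    have h2 : ContinuousAt (fun z : EuclideanSpace ℂ (Fin n) => Real.log ‖z‖) z :=
      (continuous_norm.continuousAt).log (norm_ne_zero_iff.mpr hz2')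
    have h3 : ContinuousAt
        (fun z : EuclideanSpace ℂ (Fin n) =>
          -(((k : ℝ))⁻¹ * Real.log (‖MvPolynomial.eval (fun i => z i) p‖))
            + 2 * Real.log ‖z‖) z := ((h1.const_mul _).neg).add (h2.const_mul 2)
    exact h3.continuousWithinAt
  intro C
  set M : ℝ := ∑ d ∈ p.support, ‖p.coeff d‖ with hM
  have hp0 : p ≠ 0 := fun h => h0 (by simp [h])
  have hMpos : 0 < M := by
    obtain ⟨d, hd'⟩ := MvPolynomial.support_nonempty.mpr hp0
    exact Finset.sum_pos' (fun e _ => norm_nonneg _)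
      ⟨d, hd', norm_pos_iff.mpr (MvPolynomial.mem_support_iff.mp hd')⟩
  have hsub : {z : EuclideanSpace ℂ (Fin n) |
      MvPolynomial.eval (fun i => z i) p ≠ 0 ∧ z ≠ 0 ∧
      -(((k : ℝ))⁻¹ * Real.log (‖MvPolynomial.eval (fun i => z i) p‖))
        + 2 * Real.log ‖z‖ < C} ⊆
      Metric.closedBall 0 (max 1 (Real.exp (C + (k:ℝ)⁻¹ * Real.log M + Real.log 2))) := by
    intro z hz
    obtain ⟨hz1, hz2, hz3⟩ := hz
    rw [Metric.mem_closedBall, dist_zero_right]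
    rcases le_or_gt ‖z‖ 1 with h | h
    · exact h.trans (le_max_left _ _)
    refine le_trans ?_ (le_max_right _ _)
    have ha : 0 < ‖MvPolynomial.eval (fun i => z i) p‖ :=
      norm_pos_iff.mpr hz1
    have hlog1 : Real.log (‖MvPolynomial.eval (fun i => z i) p‖)
        ≤ Real.log M + (k:ℝ) * Real.log (1 + ‖z‖) := by
      calc Real.log (‖MvPolynomial.eval (fun i => z i) p‖)
          ≤ Real.log (M * (1 + ‖z‖) ^ k) := Real.log_le_log ha (eval_abs_le p z)
        _ = Real.log M + (k:ℝ) * Real.log (1 + ‖z‖) := by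
            rw [Real.log_mul hMpos.ne' (by positivity), Real.log_pow]
    have fact2 : (k:ℝ)⁻¹ * Real.log (‖MvPolynomial.eval (fun i => z i) p‖)
        ≤ (k:ℝ)⁻¹ * Real.log M + Real.log (1 + ‖z‖) := by
      have h' := mul_le_mul_of_nonneg_left hlog1 (inv_nonneg.mpr hkpos.le)
      have hinv : ((k:ℝ))⁻¹ * ((k:ℝ) * Real.log (1 + ‖z‖)) = Real.log (1 + ‖z‖) := by
        field_simp
      rw [mul_add, hinv] at h'
      exact h'
    have fact3 : Real.log (1 + ‖z‖) ≤ Real.log 2 + Real.log ‖z‖ := by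
      rw [← Real.log_mul two_ne_zero (by positivity : ‖z‖ ≠ 0)]
      exact Real.log_le_log (by positivity) (by linarith)
    have hlt : Real.log ‖z‖ < C + (k:ℝ)⁻¹ * Real.log M + Real.log 2 := by linarith
    calc ‖z‖ = Real.exp (Real.log ‖z‖) := (Real.exp_log (by linarith)).symm
      _ ≤ Real.exp (C + (k:ℝ)⁻¹ * Real.log M + Real.log 2) := Real.exp_le_exp.mpr hlt.le
  have hbdd := (Metric.isBounded_closedBall.subset hsub).isCompact_closure
  refine ⟨hbdd, ?_⟩
  intro z₀ hz₀
  by_contra hzc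
  simp only [Set.mem_setOf_eq, not_not] at hzc
  have hz₀ne : z₀ ≠ 0 := by
    rintro rfl
    exact h0 hzc
  have hr : 0 < ‖z₀‖ := norm_pos_iff.mpr hz₀ne
  set ε := Real.exp ((k:ℝ) * (2 * Real.log (‖z₀‖ / 2) - C)) with hε
  have hcont : ContinuousAt
      (fun z : EuclideanSpace ℂ (Fin n) =>
        ‖MvPolynomial.eval (fun i => z i) p‖) z₀ :=
    (hg.norm).continuousAt
  have hev : ∀ᶠ z in nhds z₀,
      ‖MvPolynomial.eval (fun i => z i) p‖ < ε := by
    refine hcont.eventually_lt_const ?_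
    show ‖MvPolynomial.eval (fun i => z₀ i) p‖ < ε
    rw [hzc, norm_zero]
    exact Real.exp_pos _
  obtain ⟨δ, hδpos, hδ⟩ := Metric.eventually_nhds_iff.mp hev
  obtain ⟨z, hzS, hzd⟩ := Metric.mem_closure_iff.mp hz₀ (min δ (‖z₀‖ / 2))
    (lt_min hδpos (by linarith))
  obtain ⟨hz1, hz2, hz3⟩ := hzS
  have ha : 0 < ‖MvPolynomial.eval (fun i => z i) p‖ := norm_pos_iff.mpr hz1
  have habs : ‖MvPolynomial.eval (fun i => z i) p‖ < ε := by
    apply hδ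
    rw [dist_comm]
    exact hzd.trans_le (min_le_left _ _)
  have hznorm : ‖z₀‖ / 2 < ‖z‖ := by
    have h1 : dist z₀ z < ‖z₀‖ / 2 := hzd.trans_le (min_le_right _ _)
    have h2 : ‖z₀‖ - ‖z‖ ≤ ‖z₀ - z‖ := norm_sub_norm_le _ _
    rw [← dist_eq_norm] at h2
    linarith
  have hlogz : Real.log (‖z₀‖ / 2) ≤ Real.log ‖z‖ :=
    Real.log_le_log (by linarith) hznorm.le
  have hL : (k:ℝ) * (2 * Real.log (‖z₀‖ / 2) - C)
      < Real.log (‖MvPolynomial.eval (fun i => z i) p‖) := by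
    have h1 : 2 * Real.log (‖z₀‖ / 2) - C
        < (k:ℝ)⁻¹ * Real.log (‖MvPolynomial.eval (fun i => z i) p‖) := by
      linarith
    calc (k:ℝ) * (2 * Real.log (‖z₀‖ / 2) - C)
        < (k:ℝ) * ((k:ℝ)⁻¹ * Real.log (‖MvPolynomial.eval (fun i => z i) p‖)) :=
          mul_lt_mul_of_pos_left h1 hkpos
      _ = Real.log (‖MvPolynomial.eval (fun i => z i) p‖) := by
          field_simp
  have : ε < ‖MvPolynomial.eval (fun i => z i) p‖ := by
    rw [hε]
    calc Real.exp ((k:ℝ) * (2 * Real.log (‖z₀‖ / 2) - C))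
        < Real.exp (Real.log (‖MvPolynomial.eval (fun i => z i) p‖)) :=
          Real.exp_lt_exp.mpr hL
      _ = ‖MvPolynomial.eval (fun i => z i) p‖ := Real.exp_log ha
  linarith
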